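/- Let U = W⁰((λ−i)/(λ+i)) = F⁻¹ M_{(λ−i)/(λ+i)} F acting on L²(ℝ). Then U is unitary and Uʲψ₀ = ψⱼ for all j ∈ ℤ, where ψ₀(t) = √2e^{−t}1_{t>0} and ψⱼ are the extended Laguerre functions (ψⱼ(t) = −ψ_{−j−1}(−t) for j < 0). -/

import Mathlib

open MeasureTheory

/-- The `n`-th Laguerre polynomial. -/
noncomputable def laguerre (n : ℕ) (x : ℝ) : ℝ :=
  ∑ k ∈ Finset.range (n + 1), (-1 : ℝ) ^ k * (n.choose k) * x ^ k / (k.factorial)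

/-- The Laguerre function `ψₙ(t) = √2 e^{-t} Λₙ(2t)·1_{t>0}` for `n ≥ 0`. -/
noncomputable def psi (n : ℕ) (t : ℝ) : ℝ :=
  if 0 < t then Real.sqrt 2 * Real.exp (-t) * laguerre n (2 * t) else 0

/-- The extended family `ψₙ`, `n ∈ ℤ`, with `ψₙ(t) = -ψ_{-n-1}(-t)` for `n < 0`. -/
noncomputable def psiZ (n : ℤ) (t : ℝ) : ℝ :=
  if 0 ≤ n then psi n.toNat t else -psi (-n - 1).toNat (-t)

/-- The symbol `m(λ) = (λ-i)/(λ+i)` of the operator `U = W⁰((λ-i)/(λ+i))`. -/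
noncomputable def symbU (l : ℝ) : ℂ := ((l : ℂ) - Complex.I) / ((l : ℂ) + Complex.I)

open Set Filter

noncomputable def cc (l : ℝ) : ℂ := 1 - Complex.I * l

lemma cc_ne (l : ℝ) : cc l ≠ 0 := by
  intro h
  have := congrArg Complex.re h
  simp [cc] at this

lemma cc_sub_two_ne (l : ℝ) : cc l - 2 ≠ 0 := by
  intro h
  have := congrArg Complex.re h
  norm_num [cc] at this

lemma lI_add_ne (l : ℝ) : (l : ℂ) + Complex.I ≠ 0 := by
  intro h
  have := congrArg Complex.im h
  simp at this

lemma lI_sub_ne (l : ℝ) : (l : ℂ) - Complex.I ≠ 0 := by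
  intro h
  have := congrArg Complex.im h
  simp at this

lemma norm_integrand (k : ℕ) (l : ℝ) {t : ℝ} (ht : 0 < t) :
    ‖(t : ℂ) ^ k * Complex.exp (-(cc l * t))‖ = t ^ k * Real.exp (-t) := by
  rw [norm_mul, norm_pow, Complex.norm_exp]
  have h1 : ‖(t : ℂ)‖ = t := by
    simp [abs_of_pos ht]
  have h2 : (-(cc l * (t:ℂ))).re = -t := by simp [cc]
  rw [h1, h2]

lemma integrableOn_pk (k : ℕ) (l : ℝ) :
    IntegrableOn (fun t : ℝ => (t : ℂ) ^ k * Complex.exp (-(cc l * t))) (Ioi 0) := by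
  have hG := Real.GammaIntegral_convergent (s := (k : ℝ) + 1) (by positivity)
  refine hG.mono' ?_ ?_
  · exact ((Complex.continuous_ofReal.pow k).mul
      (Complex.continuous_exp.comp (by continuity))).aestronglyMeasurable
  · rw [ae_restrict_iff' measurableSet_Ioi]
    filter_upwards with t ht
    rw [norm_integrand k l ht, add_sub_cancel_right,
      Real.rpow_natCast, mul_comm]

lemma hasDeriv_exp_term (c : ℂ) (t : ℝ) :
    HasDerivAt (fun t : ℝ => Complex.exp (-(c * t))) (-c * Complex.exp (-(c * t))) t := by
  have h0 : HasDerivAt (fun t : ℝ => (t : ℂ)) 1 t := Complex.ofRealCLM.hasDerivAt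
  have h1 : HasDerivAt (fun t : ℝ => -(c * (t : ℂ))) (-c) t := by
    have := (h0.const_mul c).neg
    simp only [mul_one] at this
    exact this
  have := (Complex.hasDerivAt_exp (-(c * t))).comp t h1
  refine this.congr_deriv ?_
  ring

lemma tendsto_term (k : ℕ) (l : ℝ) :
    Tendsto (fun t : ℝ => (t : ℂ) ^ k * Complex.exp (-(cc l * t))) atTop (nhds 0) := by
  rw [tendsto_zero_iff_norm_tendsto_zero]
  have := Real.tendsto_pow_mul_exp_neg_atTop_nhds_zero k
  apply this.congr'
  filter_upwards [eventually_gt_atTop (0:ℝ)] with t ht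
  rw [norm_integrand k l ht]

lemma integral_pk (l : ℝ) : ∀ k : ℕ,
    ∫ t in Ioi (0:ℝ), (t : ℂ) ^ k * Complex.exp (-(cc l * t))
      = (k.factorial : ℂ) / (cc l) ^ (k + 1)
  | 0 => by
    have key := integral_Ioi_of_hasDerivAt_of_tendsto (a := (0:ℝ)) (m := (0:ℂ))
      (f := fun t : ℝ => -Complex.exp (-(cc l * t)) / cc l)
      (f' := fun t : ℝ => (t : ℂ) ^ 0 * Complex.exp (-(cc l * t)))
      ?_ ?_ (integrableOn_pk 0 l) ?_
    · rw [key]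
      simp [neg_div, one_div]
    · apply Continuous.continuousWithinAt
      exact ((Complex.continuous_exp.comp (by continuity)).neg).div_const _
    · intro x _
      have := ((hasDeriv_exp_term (cc l) x).neg).div_const (cc l)
      refine this.congr_deriv ?_
      field_simp [cc_ne l]
    · have := (tendsto_term 0 l).neg.div_const (cc l)
      simpa using this
  | (k+1) => by
    have IH := integral_pk l k
    have key := integral_Ioi_of_hasDerivAt_of_tendsto (a := (0:ℝ)) (m := (0:ℂ))
      (f := fun t : ℝ => -((t : ℂ) ^ (k+1) * Complex.exp (-(cc l * t))) / cc l)
      (f' := fun t : ℝ => (t : ℂ) ^ (k+1) * Complex.exp (-(cc l * t))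
        - ((k+1 : ℂ) / cc l) * ((t : ℂ) ^ k * Complex.exp (-(cc l * t))))
      ?_ ?_ ?_ ?_
    · have hsub : ∫ t in Ioi (0:ℝ), ((t : ℂ) ^ (k+1) * Complex.exp (-(cc l * t))
          - ((k+1 : ℂ) / cc l) * ((t : ℂ) ^ k * Complex.exp (-(cc l * t))))
          = (∫ t in Ioi (0:ℝ), (t : ℂ) ^ (k+1) * Complex.exp (-(cc l * t)))
            - ((k+1 : ℂ) / cc l) * ∫ t in Ioi (0:ℝ), (t : ℂ) ^ k * Complex.exp (-(cc l * t)) := by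
        rw [integral_sub (integrableOn_pk (k+1) l) ((integrableOn_pk k l).const_mul _),
          integral_const_mul]
      rw [key] at hsub
      have h2 : (∫ t in Ioi (0:ℝ), (t : ℂ) ^ (k+1) * Complex.exp (-(cc l * t)))
          = ((k+1 : ℂ) / cc l) * ((k.factorial : ℂ) / (cc l) ^ (k + 1)) := by
        rw [← IH]
        have h0 : ((0:ℂ) - -((0:ℝ) ^ (k+1) * Complex.exp (-(cc l * (0:ℝ)))) / cc l : ℂ) = 0 := by
          norm_num
        rw [h0] at hsub
        exact sub_eq_zero.mp hsub.symm
      rw [h2, Nat.factorial_succ]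
      push_cast
      field_simp
      ring
    · apply Continuous.continuousWithinAt
      exact (((Complex.continuous_ofReal.pow _).mul
        (Complex.continuous_exp.comp (by continuity))).neg).div_const _
    · intro x _
      have hp : HasDerivAt (fun t : ℝ => (t : ℂ) ^ (k+1)) ((k+1 : ℂ) * (x : ℂ) ^ k) x := by
        simpa using (hasDerivAt_pow (k+1) ((x : ℂ))).comp_ofReal
      have := ((hp.mul (hasDeriv_exp_term (cc l) x)).neg).div_const (cc l)
      refine this.congr_deriv ?_
      field_simp [cc_ne l]
      ring
    · exact (integrableOn_pk (k+1) l).sub ((integrableOn_pk k l).const_mul _)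
    · have := ((tendsto_term (k+1) l).neg).div_const (cc l)
      simpa using this

lemma psiC_eq (n : ℕ) (l : ℝ) {t : ℝ} (ht : t ∈ Ioi (0:ℝ)) :
    (psi n t : ℂ) * Complex.exp (Complex.I * l * t)
      = ∑ k ∈ Finset.range (n+1),
          ((Real.sqrt 2 : ℂ) * (-1)^k * (n.choose k) * 2^k / (k.factorial))
            * ((t : ℂ)^k * Complex.exp (-(cc l * t))) := by
  rw [mem_Ioi] at ht
  have hexp : (Real.exp (-t) : ℂ) * Complex.exp (Complex.I * l * t)
      = Complex.exp (-(cc l * t)) := by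
    rw [Complex.ofReal_exp, ← Complex.exp_add]
    congr 1
    simp [cc]
    ring
  simp only [psi, if_pos ht, laguerre]
  push_cast
  rw [Finset.mul_sum, Finset.sum_mul]
  refine Finset.sum_congr rfl fun k _ => ?_
  rw [← hexp]
  push_cast
  ring

lemma fourier_psi (n : ℕ) (l : ℝ) :
    (∫ t : ℝ, (psi n t : ℂ) * Complex.exp (Complex.I * l * t))
      = (Real.sqrt 2 : ℂ) * (cc l - 2)^n / (cc l)^(n+1) := by
  rw [← setIntegral_eq_integral_of_forall_compl_eq_zero
    (s := Ioi (0:ℝ)) (fun t ht => by rw [mem_Ioi] at ht; simp [psi, ht])]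
  rw [setIntegral_congr_fun measurableSet_Ioi (fun t ht => psiC_eq n l ht)]
  rw [integral_finset_sum _ (fun k _ => ((integrableOn_pk k l).const_mul _))]
  simp_rw [integral_const_mul, integral_pk l]
  have hterm : ∀ k ∈ Finset.range (n+1),
      ((Real.sqrt 2 : ℂ) * (-1)^k * (n.choose k) * 2^k / (k.factorial))
          * ((k.factorial : ℂ) / (cc l)^(k+1))
        = (Real.sqrt 2 : ℂ) / (cc l)^(n+1) * ((-2:ℂ)^k * (cc l)^(n-k) * (n.choose k)) := by
    intro k hk
    rw [Finset.mem_range] at hk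
    have hpow : (cc l)^(n+1) = (cc l)^(k+1) * (cc l)^(n-k) := by
      rw [← pow_add]; congr 1; omega
    have hfac : (k.factorial : ℂ) ≠ 0 := Nat.cast_ne_zero.mpr k.factorial_ne_zero
    have hc := cc_ne l
    rw [neg_pow]
    field_simp [hpow]
    have h2 : ((-2:ℂ))^k = (-1:ℂ)^k * 2^k := by rw [neg_pow]
    rw [h2, hpow]; ring
  rw [Finset.sum_congr rfl hterm, ← Finset.mul_sum, ← add_pow]
  have : (-2 : ℂ) + cc l = cc l - 2 := by ring
  rw [this]
  ring

lemma symbU_eq (l : ℝ) : symbU l = (cc l - 2) / cc l := by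
  unfold symbU
  rw [div_eq_div_iff (lI_add_ne l) (cc_ne l)]
  unfold cc
  linear_combination (2 * (l:ℂ)) * Complex.I_sq

/-- `U = F⁻¹ M_{(λ-i)/(λ+i)} F` is unitary on `L²(ℝ)` (its symbol is unimodular, so the
multiplication operator preserves the `L²` norm), and `Uʲψ₀ = ψⱼ` for all `j ∈ ℤ`:
on the Fourier side, `Fψⱼ = m(λ)ʲ · Fψ₀`. -/
theorem stmt16 :
    (∀ l : ℝ, ‖symbU l‖ = 1) ∧
    (∀ f : ℝ → ℂ, ∫ l : ℝ, ‖symbU l * f l‖ ^ 2 = ∫ l : ℝ, ‖f l‖ ^ 2) ∧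
    (∀ (j : ℤ) (l : ℝ),
      (∫ t : ℝ, (psiZ j t : ℂ) * Complex.exp (Complex.I * l * t)) =
        symbU l ^ j * ∫ t : ℝ, (psiZ 0 t : ℂ) * Complex.exp (Complex.I * l * t)) := by
  have habs : ∀ l : ℝ, ‖symbU l‖ = 1 := by
    intro l
    unfold symbU
    rw [norm_div, div_eq_one_iff_eq (by simpa using lI_add_ne l)]
    rw [Complex.norm_def, Complex.norm_def, Complex.normSq_apply, Complex.normSq_apply]
    simp
  refine ⟨habs, ?_, ?_⟩
  · intro f
    have h : (fun l => ‖symbU l * f l‖ ^ 2) = fun l => ‖f l‖ ^ 2 := by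
      funext l
      rw [norm_mul, habs, one_mul]
    rw [h]
  · intro j l
    have hc := cc_ne l
    have hc2 := cc_sub_two_ne l
    have h0 : (∫ t : ℝ, (psiZ 0 t : ℂ) * Complex.exp (Complex.I * l * t))
        = (Real.sqrt 2 : ℂ) / cc l := by
      have hz : ∀ t : ℝ, psiZ 0 t = psi 0 t := fun t => by simp [psiZ]
      simp_rw [hz]
      rw [fourier_psi 0 l]
      norm_num
    rcases le_or_gt 0 j with hj | hj
    · obtain ⟨n, rfl⟩ := Int.eq_ofNat_of_zero_le hj
      have hz : ∀ t : ℝ, psiZ n t = psi n t := fun t => by simp [psiZ]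
      simp_rw [hz]
      rw [fourier_psi n l, h0, zpow_natCast, symbU_eq, div_pow]
      field_simp
      ring
    · set n : ℕ := (-j-1).toNat with hn
      have hjn : j = -(n:ℤ) - 1 := by
        have h1 : ((-j-1).toNat : ℤ) = -j-1 := Int.toNat_of_nonneg (by omega)
        omega
      have hpsiZ : ∀ t : ℝ, psiZ j t = -psi n (-t) := fun t => by
        rw [psiZ, if_neg (by omega)]
      have step : (∫ t : ℝ, (psiZ j t : ℂ) * Complex.exp (Complex.I * l * t))
          = ∫ t : ℝ, -((psi n t : ℂ) * Complex.exp (Complex.I * (-l:ℝ) * t)) := by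
        rw [← MeasureTheory.integral_neg_eq_self
          (fun s : ℝ => -((psi n s : ℂ) * Complex.exp (Complex.I * ((-l:ℝ):ℂ) * s))) volume]
        congr 1
        funext t
        rw [hpsiZ t]
        push_cast
        have harg : Complex.I * -(l:ℂ) * -(t:ℂ) = Complex.I * l * t := by ring
        rw [harg]
        ring
      rw [step, MeasureTheory.integral_neg, fourier_psi n (-l), h0]
      have hccneg : cc (-l) = 2 - cc l := by unfold cc; push_cast; ring
      rw [hccneg, hjn, symbU_eq]
      have hzp : (-(n:ℤ) - 1) = -((n+1 : ℕ) : ℤ) := by push_cast; ring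
      rw [hzp, zpow_neg, zpow_natCast, div_pow, inv_div]
      have e1 : (2 - cc l - 2) = -(cc l) := by ring
      have e2 : (2 - cc l) = -(cc l - 2) := by ring
      rw [e1, e2, neg_pow (cc l), neg_pow (cc l - 2)]
      have h2n : ((-1:ℂ))^(n+1) = (-1:ℂ)^n * (-1) := pow_succ _ _
      rw [h2n]
      field_simp
      ring
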